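/- Fix κ > 0 and define f : (0, ∞) → ℝ by f(t) := e^{−κ√t}/√t. Then f is strictly completely monotonic: for every integer n ≥ 0 and every t > 0, (−1)ⁿ f⁽ⁿ⁾(t) > 0, where f⁽ⁿ⁾ denotes the n-th derivative of f. -/

import Mathlib

open Polynomial

lemma eval_nonneg_of_coeffs_nonneg (P : Polynomial ℝ) (h : ∀ i, 0 ≤ P.coeff i)
    {x : ℝ} (hx : 0 ≤ x) : 0 ≤ P.eval x := by
  rw [Polynomial.eval_eq_sum_range]
  exact Finset.sum_nonneg fun i _ => mul_nonneg (h i) (pow_nonneg hx i)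

lemma coeff_CXpow_mul_nonneg (a : ℝ) (ha : 0 ≤ a) (k : ℕ) (P : Polynomial ℝ)
    (h : ∀ i, 0 ≤ P.coeff i) (i : ℕ) :
    0 ≤ (Polynomial.C a * Polynomial.X ^ k * P).coeff i := by
  rw [mul_assoc, mul_comm (Polynomial.X ^ k) P, Polynomial.coeff_C_mul,
    Polynomial.coeff_mul_X_pow']
  split
  · exact mul_nonneg ha (h _)
  · simp

lemma resolvent_aux (κ : ℝ) (hκ : 0 < κ) (P : Polynomial ℝ) {t : ℝ} (ht : 0 < t) :
    HasDerivAt (fun s : ℝ => Real.exp (-κ * Real.sqrt s) * P.eval (Real.sqrt s)⁻¹)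
      (-(Real.exp (-κ * Real.sqrt t) *
        (Polynomial.C (κ/2) * Polynomial.X * P
          + Polynomial.C (1/2) * Polynomial.X ^ 3 * P.derivative).eval (Real.sqrt t)⁻¹)) t := by
  have hs : Real.sqrt t ≠ 0 := ne_of_gt (Real.sqrt_pos.mpr ht)
  have h1 : HasDerivAt Real.sqrt (1 / (2 * Real.sqrt t)) t := Real.hasDerivAt_sqrt (ne_of_gt ht)
  have h2 : HasDerivAt (fun s : ℝ => -κ * Real.sqrt s) (-κ * (1 / (2 * Real.sqrt t))) t :=
    h1.const_mul (-κ)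
  have h3 : HasDerivAt (fun s : ℝ => Real.exp (-κ * Real.sqrt s))
      (Real.exp (-κ * Real.sqrt t) * (-κ * (1 / (2 * Real.sqrt t)))) t := h2.exp
  have h4 : HasDerivAt (fun s : ℝ => (Real.sqrt s)⁻¹)
      (-(1 / (2 * Real.sqrt t)) / (Real.sqrt t) ^ 2) t := h1.inv hs
  have h5 : HasDerivAt (fun s : ℝ => P.eval (Real.sqrt s)⁻¹)
      (P.derivative.eval (Real.sqrt t)⁻¹ * (-(1 / (2 * Real.sqrt t)) / (Real.sqrt t) ^ 2)) t :=
    (P.hasDerivAt _).comp t h4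
  have ht2 : (Real.sqrt t) ^ 2 = t := Real.sq_sqrt ht.le
  rw [ht2] at h4 h5
  have h6 : HasDerivAt (fun s : ℝ => Real.exp (-κ * Real.sqrt s) * P.eval (Real.sqrt s)⁻¹) _ t :=
    h3.mul h5
  convert h6 using 1
  simp only [Polynomial.eval_add, Polynomial.eval_mul, Polynomial.eval_C, Polynomial.eval_X,
    Polynomial.eval_pow]
  rw [one_div] at *
  field_simp
  linear_combination (Polynomial.eval (1 / Real.sqrt t) P.derivative) * ht2

theorem resolvent_kernel_sqrt_strictly_completely_monotonic (κ : ℝ) (hκ : 0 < κ) :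
    ∀ (n : ℕ) (t : ℝ), 0 < t →
      0 < (-1 : ℝ) ^ n *
        iteratedDeriv n (fun s : ℝ => Real.exp (-κ * Real.sqrt s) / Real.sqrt s) t := by
  have key : ∀ n : ℕ, ∃ P : Polynomial ℝ, (∀ i, 0 ≤ P.coeff i) ∧
      (∀ x : ℝ, 0 < x → 0 < P.eval x) ∧
      ∀ t : ℝ, 0 < t →
        iteratedDeriv n (fun s : ℝ => Real.exp (-κ * Real.sqrt s) / Real.sqrt s) t
          = (-1 : ℝ) ^ n * (Real.exp (-κ * Real.sqrt t) * P.eval (Real.sqrt t)⁻¹) := by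
    intro n
    induction n with
    | zero =>
      refine ⟨Polynomial.X, ?_, ?_, ?_⟩
      · intro i
        simp [Polynomial.coeff_X]
        split <;> norm_num
      · intro x hx; simpa using hx
      · intro t ht
        simp [iteratedDeriv_zero, div_eq_mul_inv]
    | succ n ih =>
      obtain ⟨P, hc, hpos, hEq⟩ := ih
      refine ⟨Polynomial.C (κ/2) * Polynomial.X * P
          + Polynomial.C (1/2) * Polynomial.X ^ 3 * P.derivative, ?_, ?_, ?_⟩
      · intro i
        simp only [Polynomial.coeff_add]
        have c1 : 0 ≤ (Polynomial.C (κ/2) * Polynomial.X * P).coeff i := by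
          have := coeff_CXpow_mul_nonneg (κ/2) (by positivity) 1 P hc i
          simpa using this
        have c2 : 0 ≤ (Polynomial.C (1/2) * Polynomial.X ^ 3 * P.derivative).coeff i := by
          refine coeff_CXpow_mul_nonneg (1/2) (by norm_num) 3 P.derivative ?_ i
          intro j
          rw [Polynomial.coeff_derivative]
          exact mul_nonneg (hc _) (by positivity)
        exact add_nonneg c1 c2
      · intro x hx
        simp only [Polynomial.eval_add, Polynomial.eval_mul, Polynomial.eval_C,
          Polynomial.eval_X, Polynomial.eval_pow]
        have d1 : 0 < κ/2 * x * P.eval x := by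
          have := hpos x hx; positivity
        have d2 : 0 ≤ (1/2 : ℝ) * x ^ 3 * P.derivative.eval x := by
          have hd : 0 ≤ P.derivative.eval x := by
            apply eval_nonneg_of_coeffs_nonneg
            · intro i
              rw [Polynomial.coeff_derivative]
              exact mul_nonneg (hc _) (by positivity)
            · exact le_of_lt hx
          positivity
        linarith
      · intro t ht
        rw [iteratedDeriv_succ]
        have hev : (iteratedDeriv n (fun s : ℝ => Real.exp (-κ * Real.sqrt s) / Real.sqrt s))
            =ᶠ[nhds t] fun s => (-1 : ℝ) ^ n * (Real.exp (-κ * Real.sqrt s) * P.eval (Real.sqrt s)⁻¹) := by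
          filter_upwards [eventually_gt_nhds ht] with s hs
          exact hEq s hs
        rw [hev.deriv_eq]
        have hd := ((resolvent_aux κ hκ P ht).const_mul ((-1 : ℝ) ^ n)).deriv
        rw [hd]
        ring
  intro n t ht
  obtain ⟨P, hc, hpos, hEq⟩ := key n
  rw [hEq t ht]
  have h1 : 0 < P.eval (Real.sqrt t)⁻¹ :=
    hpos _ (by positivity)
  have h2 : ((-1 : ℝ) ^ n) * ((-1 : ℝ) ^ n) = 1 := by
    rw [← pow_add]
    exact Even.neg_one_pow ⟨n, rfl⟩
  calc 0 < Real.exp (-κ * Real.sqrt t) * P.eval (Real.sqrt t)⁻¹ := by positivity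
    _ = (-1:ℝ)^n * ((-1:ℝ)^n * (Real.exp (-κ * Real.sqrt t) * P.eval (Real.sqrt t)⁻¹)) := by
        rw [← mul_assoc, h2, one_mul]
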